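/- Let (G,f) be the n-ary group b-derived from a group (G,∘), i.e. f(x_1,...,x_n) = x_1 ∘ x_2 ∘ ... ∘ x_n ∘ b where b lies in the center of (G,∘). If μ is a fuzzy subgroup of (G,∘) such that μ(b) ≥ μ(x) for every x ∈ G, then μ is a fuzzy n-ary subgroup of (G,f). -/

import Mathlib

open Classical

variable {G : Type*}

/-- The composition appearing in the (i,j)-associativity law: apply `f` to the
sequence `x : Fin (2n-1) → G` with an inner application of `f` starting at position `i`. -/
def nAryComp {n : ℕ} (f : (Fin n → G) → G) (i : Fin n) (x : Fin (2 * n - 1) → G) : G :=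
  f (fun k => if (k : ℕ) < (i : ℕ) then
        x ⟨(k : ℕ), by have hk := k.isLt; omega⟩
      else if (k : ℕ) = (i : ℕ) then
        f (fun m => x ⟨(i : ℕ) + (m : ℕ), by have hi := i.isLt; have hm := m.isLt; omega⟩)
      else x ⟨(k : ℕ) + n - 1, by have hk := k.isLt; omega⟩)

/-- `(G, f)` is an `n`-ary group: `f` is associative and all equations are uniquely solvable. -/
structure IsNAryGroup (n : ℕ) (f : (Fin n → G) → G) : Prop where
  assoc : ∀ (i j : Fin n) (x : Fin (2 * n - 1) → G), nAryComp f i x = nAryComp f j x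
  solv : ∀ (i : Fin n) (x : Fin n → G) (x₀ : G), ∃! z : G, f (Function.update x i z) = x₀

/-- `y` is the skew element of `x`: `f(x,...,x,y) = x` with `x` repeated `n-1` times. -/
def IsSkew {n : ℕ} (f : (Fin n → G) → G) (x y : G) : Prop :=
  f (fun k => if (k : ℕ) = n - 1 then y else x) = x

/-- `H` is an `n`-ary subgroup of `(G,f)`. -/
def IsNArySubgroup {n : ℕ} (f : (Fin n → G) → G) (H : Set G) : Prop :=
  H.Nonempty ∧ (∀ x : Fin n → G, (∀ i, x i ∈ H) → f x ∈ H) ∧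
    ∀ x y : G, x ∈ H → IsSkew f x y → y ∈ H

/-- `μ` is a fuzzy `n`-ary subgroup of `(G,f)`. -/
def IsFuzzyNArySubgroup {n : ℕ} (f : (Fin n → G) → G) (μ : G → ℝ) : Prop :=
  (∀ x : Fin n → G, (⨅ i, μ (x i)) ≤ μ (f x)) ∧
    ∀ x y : G, IsSkew f x y → μ x ≤ μ y

/-- Let `(G,f)` be the `n`-ary group `b`-derived from a group `G`, with `b` central:
`f(x₁,...,xₙ) = x₁ * x₂ * ⋯ * xₙ * b`. Any fuzzy subgroup `μ` of `G` with `μ(b) ≥ μ(x)` for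
every `x ∈ G` is a fuzzy `n`-ary subgroup of `(G,f)`. -/
theorem stmt7 {H : Type*} [Group H] {n : ℕ} (hn : 2 ≤ n)
    (b : H) (hb : b ∈ Subgroup.center H)
    (μ : H → ℝ) (hμ : ∀ x, μ x ∈ Set.Icc (0 : ℝ) 1)
    (h₁ : ∀ x y : H, min (μ x) (μ y) ≤ μ (x * y))
    (h₂ : ∀ x : H, μ x ≤ μ x⁻¹)
    (hbmax : ∀ x, μ x ≤ μ b) :
    IsFuzzyNArySubgroup (fun x : Fin n → H => (List.ofFn x).prod * b) μ := by
  have hone : ∀ x : H, μ x ≤ μ 1 := fun x => by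
    have h := h₁ x x⁻¹
    simp only [mul_inv_cancel] at h
    exact le_trans (le_min le_rfl (h₂ x)) h
  have hpow : ∀ (x : H) (k : ℕ), μ x ≤ μ (x ^ k) := by
    intro x k
    induction k with
    | zero => simpa using hone x
    | succ k ih => rw [pow_succ]; exact le_trans (le_min ih le_rfl) (h₁ _ _)
  have hlist : ∀ (c : ℝ) (l : List H), c ≤ μ 1 → (∀ a ∈ l, c ≤ μ a) → c ≤ μ l.prod := by
    intro c l hc hl
    induction l with
    | nil => simpa
    | cons a t ih =>
      rw [List.prod_cons]
      exact le_trans (le_min (hl a (by simp)) (ih fun a ha => hl a (by simp [ha]))) (h₁ _ _)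
  constructor
  · intro x
    have hbdd : BddBelow (Set.range fun i => μ (x i)) := ⟨0, by rintro _ ⟨i, rfl⟩; exact (hμ _).1⟩
    have hle : ∀ i, (⨅ i, μ (x i)) ≤ μ (x i) := fun i => ciInf_le hbdd i
    set c := ⨅ i, μ (x i) with hc
    have hc1 : c ≤ μ 1 := le_trans (hle ⟨0, by omega⟩) (hone _)
    have hprod : c ≤ μ (List.ofFn x).prod := by
      refine hlist c _ hc1 ?_
      intro a ha
      rw [List.mem_ofFn] at ha
      obtain ⟨i, rfl⟩ := ha
      exact hle i
    exact le_trans (le_min hprod (le_trans (hle ⟨0, by omega⟩) (hbmax _))) (h₁ _ _)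
  · intro x y hsk
    unfold IsSkew at hsk
    simp only at hsk
    have hl : (List.ofFn fun k : Fin n => if (k : ℕ) = n - 1 then y else x)
        = List.replicate (n - 1) x ++ [y] := by
      apply List.ext_getElem
      · simp; omega
      · intro i h1 h2
        simp only [List.getElem_ofFn]
        rcases Nat.lt_or_ge i (n - 1) with hi | hi
        · rw [List.getElem_append_left (by simpa using hi)]
          simp [Nat.ne_of_lt hi]
        · have hieq : i = n - 1 := by simp at h2; omega
          rw [List.getElem_append_right (by simpa using hi)]
          simp [hieq]
    rw [hl, List.prod_append, List.prod_replicate, List.prod_singleton] at hsk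
    have hy : y = (x ^ (n - 1))⁻¹ * x * b⁻¹ := by
      have h := congrArg (fun z => (x ^ (n - 1))⁻¹ * z * b⁻¹) hsk
      beta_reduce at h
      rw [← h]; group
    rw [hy]
    have k1 : μ x ≤ μ (x ^ (n - 1))⁻¹ := le_trans (hpow x _) (h₂ _)
    have k2 : μ x ≤ μ ((x ^ (n - 1))⁻¹ * x) := le_trans (le_min k1 le_rfl) (h₁ _ _)
    have k3 : μ x ≤ μ b⁻¹ := le_trans (hbmax x) (h₂ b)
    exact le_trans (le_min k2 k3) (h₁ _ _)
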